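/- Let c ≥ 0 be a real number and k ≥ 1 an integer. Then there exist polynomials u₀, u₁ ∈ ℝ[X], each a sum of squares of polynomials, with deg(u₀) ≤ k and deg(u₁·(X−c)) ≤ k, such that X^k − c^k = u₀ + u₁·(X − c). -/
import Mathlib


open Polynomial

def MyIsSOS (p : Polynomial ℝ) : Prop :=
  ∃ (m : ℕ) (q : Fin m → Polynomial ℝ), p = ∑ j, (q j)^2

lemma mysos_zero : MyIsSOS 0 := ⟨0, ![], by simp⟩

lemma mysos_sq (p : Polynomial ℝ) : MyIsSOS (p ^ 2) :=
  ⟨1, ![p], by simp⟩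

lemma mysos_add {p q : Polynomial ℝ} (hp : MyIsSOS p) (hq : MyIsSOS q) :
    MyIsSOS (p + q) := by
  obtain ⟨m, f, rfl⟩ := hp
  obtain ⟨n, g, rfl⟩ := hq
  refine ⟨m + n, Fin.append f g, ?_⟩
  rw [Fin.sum_univ_add]
  simp [Fin.append_left, Fin.append_right]

lemma mysos_sq_mul {p : Polynomial ℝ} (q : Polynomial ℝ) (hp : MyIsSOS p) :
    MyIsSOS (q ^ 2 * p) := by
  obtain ⟨m, f, rfl⟩ := hp
  refine ⟨m, fun j => q * f j, ?_⟩
  rw [Finset.mul_sum]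
  simp [mul_pow]

lemma mysos_const {a : ℝ} (ha : 0 ≤ a) : MyIsSOS (C a) := by
  have : (C a : Polynomial ℝ) = (C (Real.sqrt a)) ^ 2 := by
    rw [← C_pow, Real.sq_sqrt ha]
  rw [this]; exact mysos_sq _

lemma stmt16_aux (c : ℝ) (hc : 0 ≤ c) :
    ∀ k : ℕ, 1 ≤ k → ∃ u₀ u₁ : Polynomial ℝ,
      MyIsSOS u₀ ∧ MyIsSOS u₁ ∧
      u₀.natDegree ≤ k ∧ u₁.natDegree ≤ k - 1 ∧
      (Polynomial.X : Polynomial ℝ)^k - Polynomial.C (c^k)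
        = u₀ + u₁ * (Polynomial.X - Polynomial.C c) := by
  intro k
  induction k using Nat.strong_induction_on with
  | _ k ih =>
    intro hk
    match k, hk with
    | 1, _ =>
      refine ⟨0, 1, mysos_zero, ?_, by simp, by simp, by simp⟩
      have : (1 : Polynomial ℝ) = (1 : Polynomial ℝ) ^ 2 := by ring
      rw [this]; exact mysos_sq _
    | 2, _ =>
      refine ⟨(X - C c)^2, C (2 * c), mysos_sq _, mysos_const (by linarith), ?_, ?_, ?_⟩
      · calc ((X - C c)^2 : Polynomial ℝ).natDegree ≤ 2 * (X - C c).natDegree := by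
              simpa using natDegree_pow_le (p := (X - C c : Polynomial ℝ)) (n := 2)
          _ ≤ 2 := by
              have := natDegree_X_sub_C_le (r := c)
              omega
      · have := natDegree_C (a := (2*c)); omega
      · simp only [C_mul, C_pow, map_ofNat]
        ring
    | (n + 3), _ =>
      obtain ⟨u₀, u₁, h0, h1, hd0, hd1, heq⟩ := ih (n + 1) (by omega) (by omega)
      refine ⟨X^2 * u₀ + C (c^(n+1)) * (X - C c)^2,
              X^2 * u₁ + C (2 * c^(n+2)), ?_, ?_, ?_, ?_, ?_⟩
      · exact mysos_add (mysos_sq_mul X h0)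
          (by
            have : (C (c^(n+1)) : Polynomial ℝ) * (X - C c)^2
                = (C (Real.sqrt (c^(n+1))) * (X - C c))^2 := by
              rw [mul_pow, ← C_pow, Real.sq_sqrt (pow_nonneg hc _)]
            rw [this]; exact mysos_sq _)
      · exact mysos_add (mysos_sq_mul X h1)
          (mysos_const (by positivity))
      · refine (natDegree_add_le _ _).trans ?_
        refine max_le ?_ ?_
        · refine (natDegree_mul_le).trans ?_
          have : (X^2 : Polynomial ℝ).natDegree = 2 := natDegree_X_pow 2
          omega
        · refine (natDegree_mul_le).trans ?_
          have h1' : (C (c^(n+1)) : Polynomial ℝ).natDegree = 0 := natDegree_C _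
          have h2' : ((X - C c : Polynomial ℝ)^2).natDegree ≤ 2 := by
            calc ((X - C c)^2 : Polynomial ℝ).natDegree ≤ 2 * (X - C c).natDegree := by
                  simpa using natDegree_pow_le (p := (X - C c : Polynomial ℝ)) (n := 2)
              _ ≤ 2 := by
                  have := natDegree_X_sub_C_le (r := c)
                  omega
          omega
      · refine (natDegree_add_le _ _).trans ?_
        refine max_le ?_ ?_
        · refine (natDegree_mul_le).trans ?_
          have : (X^2 : Polynomial ℝ).natDegree = 2 := natDegree_X_pow 2
          omega
        · have := natDegree_C (a := (2 * c^(n+2)))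
          omega
      · have key : (X : Polynomial ℝ)^(n+3) - C (c^(n+3))
            = X^2 * ((X:Polynomial ℝ)^(n+1) - C (c^(n+1)))
              + C (c^(n+1)) * ((X - C c)^2 + C (2*c) * (X - C c)) := by
          simp only [C_mul, C_pow, map_ofNat]
          ring
        rw [key, heq]
        simp only [C_mul, C_pow, map_ofNat]
        ring
  
theorem stmt_16 (c : ℝ) (hc : 0 ≤ c) (k : ℕ) (hk : 1 ≤ k) :
    ∃ u₀ u₁ : Polynomial ℝ,
      (∃ (m : ℕ) (q : Fin m → Polynomial ℝ), u₀ = ∑ j, (q j)^2) ∧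
      (∃ (m : ℕ) (q : Fin m → Polynomial ℝ), u₁ = ∑ j, (q j)^2) ∧
      u₀.natDegree ≤ k ∧
      (u₁ * (Polynomial.X - Polynomial.C c)).natDegree ≤ k ∧
      (Polynomial.X : Polynomial ℝ)^k - Polynomial.C (c^k)
        = u₀ + u₁ * (Polynomial.X - Polynomial.C c) := by
  obtain ⟨u₀, u₁, h0, h1, hd0, hd1, heq⟩ := stmt16_aux c hc k hk
  refine ⟨u₀, u₁, h0, h1, hd0, ?_, heq⟩
  refine (natDegree_mul_le).trans ?_
  have := natDegree_X_sub_C_le (r := c)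
  omega
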